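/- Let k ≥ 1 be an integer, a = (a₀,…,a_{k−1}) ∈ {±1}^k, and N ≥ 3 an odd integer. Then a_j · cos(N^j θ_{a,N}) > 0 for every j = 0, 1, …, k−1. -/

import Mathlib

open Real

noncomputable section

abbrev SL2 := Matrix.SpecialLinearGroup (Fin 2) ℝ

/-- inverse hyperbolic cosine -/
def acosh (x : ℝ) : ℝ := Real.log (x + Real.sqrt (x ^ 2 - 1))

/-- the "pseudo-distance from the origin" ‖g‖ = arcosh((g₁₁²+g₁₂²+g₂₁²+g₂₂²)/2) -/
def gnorm (g : SL2) : ℝ :=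
  acosh ((g.1 0 0 ^ 2 + g.1 0 1 ^ 2 + g.1 1 0 ^ 2 + g.1 1 1 ^ 2) / 2)

def z1 (x : SL2) : ℂ :=
  (((x.1 0 0 + x.1 1 1 : ℝ) : ℂ) + Complex.I * ((x.1 1 0 - x.1 0 1 : ℝ) : ℂ)) / 2

def z2 (x : SL2) : ℂ :=
  (((x.1 0 1 + x.1 1 0 : ℝ) : ℂ) + Complex.I * ((x.1 0 0 - x.1 1 1 : ℝ) : ℂ)) / 2

/-- the spherical function ψ_{m,k}(x) = z₁(x)^{-(k+2m)} z₂(x)^k -/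
def psi (m k : ℕ) (x : SL2) : ℂ := z1 x ^ (-(k + 2 * m : ℤ)) * z2 x ^ k

/-- γ is central iff both components are ±1 -/
def IsCentral (γ : SL2 × SL2) : Prop :=
  (γ.1.1 = 1 ∨ γ.1.1 = -1) ∧ (γ.2.1 = 1 ∨ γ.2.1 = -1)

/-- ε_Γ -/
def epsGamma (Γ : Set (SL2 × SL2)) : ℝ :=
  (1 / 3) * sInf {r | ∃ γ ∈ Γ, ¬IsCentral γ ∧ r = |gnorm γ.1 - gnorm γ.2|}

/-- the set counted by N_Γ(x,R) -/
def orbitSet (Γ : Set (SL2 × SL2)) (x : SL2) (R : ℝ) : Set (SL2 × SL2) :=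
  {γ | γ ∈ Γ ∧ gnorm (γ.1 * x * γ.2⁻¹) ≤ R}

/-- the constant m(C,α,ε,s) -/
def mConst (C α ε : ℝ) (s : ℕ) : ℝ :=
  (Real.log 2 * s + 2 * α * ε + Real.log (1 + 2 ^ s * C * Real.exp (6 * α * ε))) /
    Real.log (Real.cosh ε)

def chi (x : ℝ) : ℝ := if x = 1 then 0 else 1

/-- θ_{a,N} for a tuple a of length k (with the convention a_{-1} = 1) -/
def thetaAN (a : ℕ → ℝ) (k : ℕ) (N : ℝ) : ℝ :=
  Real.pi * ∑ i ∈ Finset.range k,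
    (chi (a i) - if i = 0 then 0 else chi (a (i - 1))) * N ^ (-(i : ℤ))

/-- the sign tuple a(b) attached to b -/
def signOf (b : ℕ → ℝ) (j : ℕ) : ℝ := if 0 ≤ b j then 1 else -1

/-- ψ_{m,b} = Σ_{j<k} b_j ψ_{m,3^j} -/
def psiB (m k : ℕ) (b : ℕ → ℝ) (x : SL2) : ℂ :=
  ∑ j ∈ Finset.range k, (b j : ℂ) * psi m (3 ^ j) x

/-- f_b(u) = Σ_{j<k} b_j cos(3^j θ_{a(b),3}) u^{3^j} -/
def fb (k : ℕ) (b : ℕ → ℝ) (u : ℝ) : ℝ :=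
  ∑ j ∈ Finset.range k, b j * Real.cos (3 ^ j * thetaAN (signOf b) k 3) * u ^ 3 ^ j

/-- the rotation matrix k(θ) -/
def kMat (θ : ℝ) : SL2 :=
  ⟨!![Real.cos θ, -Real.sin θ; Real.sin θ, Real.cos θ], by
    simp [Matrix.det_fin_two_of]
    nlinarith [Real.sin_sq_add_cos_sq θ]⟩

/-- the diagonal matrix a(t) -/
def aMat (t : ℝ) : SL2 :=
  ⟨!![Real.exp t, 0; 0, Real.exp (-t)], by
    simp [Matrix.det_fin_two_of, ← Real.exp_add]⟩

end

lemma geom_aux (x : ℝ) (hx0 : 0 ≤ x) (hx : 3 * x ≤ 1) :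
    ∀ m : ℕ, ∑ t ∈ Finset.range m, x ^ (t + 1) ≤ 1 / 2 - x ^ m / 2 := by
  intro m
  induction m with
  | zero => simp
  | succ n ih =>
    rw [Finset.sum_range_succ, pow_succ]
    nlinarith [pow_nonneg hx0 n, mul_le_mul_of_nonneg_left hx (pow_nonneg hx0 n)]

lemma telescope_aux (m : ℕ → ℤ) :
    ∀ j : ℕ, ∑ i ∈ Finset.range (j + 1), (m i - if i = 0 then 0 else m (i - 1)) = m j := by
  intro j
  induction j with
  | zero => simp
  | succ n ih =>
    rw [Finset.sum_range_succ, ih]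
    simp

theorem stmt5 (k : ℕ) (hk : 1 ≤ k) (a : ℕ → ℝ) (ha : ∀ j < k, a j = 1 ∨ a j = -1)
    (N : ℕ) (hN3 : 3 ≤ N) (hNodd : Odd N) :
    ∀ j < k, 0 < a j * Real.cos ((N : ℝ) ^ j * thetaAN a k N) := by
  intro j hj
  have hNR : (3 : ℝ) ≤ (N : ℝ) := by exact_mod_cast hN3
  have hN0 : (N : ℝ) ≠ 0 := by linarith
  have hNpos : (0 : ℝ) < N := by linarith
  set m : ℕ → ℤ := fun i => if a i = 1 then 0 else 1 with hm
  set d : ℕ → ℝ := fun i => chi (a i) - if i = 0 then 0 else chi (a (i - 1)) with hd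
  have hchi : ∀ i < k, chi (a i) = (m i : ℝ) := by
    intro i hi
    rcases ha i hi with h | h <;> simp [chi, hm, h] <;> norm_num
  -- key rewriting
  have key : (N : ℝ) ^ j * thetaAN a k N
      = π * ∑ i ∈ Finset.range k, d i * (N : ℝ) ^ ((j : ℤ) - i) := by
    unfold thetaAN
    rw [mul_left_comm]
    congr 1
    rw [Finset.mul_sum]
    apply Finset.sum_congr rfl
    intro i _
    simp only [hd]
    rw [zpow_sub₀ hN0, zpow_neg, zpow_natCast, zpow_natCast, div_eq_mul_inv]
    ring
  set A : ℤ := ∑ i ∈ Finset.range (j + 1),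
      (m i - if i = 0 then 0 else m (i - 1)) * (N : ℤ) ^ (j - i) with hAdef
  have hsplit : ∑ i ∈ Finset.range k, d i * (N : ℝ) ^ ((j : ℤ) - i)
      = (∑ i ∈ Finset.range (j + 1), d i * (N : ℝ) ^ ((j : ℤ) - i))
        + ∑ i ∈ Finset.Ico (j + 1) k, d i * (N : ℝ) ^ ((j : ℤ) - i) := by
    rw [Finset.range_eq_Ico, Finset.range_eq_Ico]
    exact (Finset.sum_Ico_consecutive (fun i => d i * (N : ℝ) ^ ((j : ℤ) - i)) (Nat.zero_le _) hj).symm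
  have hA : (∑ i ∈ Finset.range (j + 1), d i * (N : ℝ) ^ ((j : ℤ) - i)) = (A : ℝ) := by
    rw [hAdef]
    push_cast
    apply Finset.sum_congr rfl
    intro i hi
    have hij : i ≤ j := by
      have := Finset.mem_range.mp hi; omega
    have hik : i < k := lt_of_le_of_lt hij hj
    have hzp : (N : ℝ) ^ ((j : ℤ) - i) = (N : ℝ) ^ ((j - i : ℕ)) := by
      rw [← zpow_natCast]
      congr 1
      omega
    rw [hzp, hd]
    congr 1
    simp only
    rw [hchi i hik]
    by_cases h0 : i = 0
    · simp [h0]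
    · have hi1 : i - 1 < k := by omega
      rw [if_neg h0, if_neg h0, hchi (i - 1) hi1]
  -- parity of A
  have hApar : ∃ T : ℤ, A = m j + 2 * T := by
    have hONZ : Odd (N : ℤ) := by exact_mod_cast hNodd
    have heven : Even (A - ∑ i ∈ Finset.range (j + 1),
        (m i - if i = 0 then 0 else m (i - 1))) := by
      rw [hAdef, ← Finset.sum_sub_distrib]
      apply Finset.even_sum
      intro i _
      have ho : Odd ((N : ℤ) ^ (j - i)) := hONZ.pow
      have he : Even ((N : ℤ) ^ (j - i) - 1) := ho.sub_odd odd_one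
      have := he.mul_left (m i - if i = 0 then 0 else m (i - 1))
      convert this using 1
      · rfl
      ring
    rw [telescope_aux m j] at heven
    obtain ⟨T, hT⟩ := heven
    exact ⟨T, by omega⟩
  obtain ⟨T, hT⟩ := hApar
  -- bound on the tail
  set x : ℝ := (N : ℝ)⁻¹ with hx
  have hx0 : 0 ≤ x := by positivity
  have hx3 : 3 * x ≤ 1 := by
    rw [hx]
    have h := mul_le_mul_of_nonneg_right hNR (inv_nonneg.mpr hNpos.le)
    rwa [mul_inv_cancel₀ hN0] at h
  set r : ℝ := ∑ i ∈ Finset.Ico (j + 1) k, d i * (N : ℝ) ^ ((j : ℤ) - i) with hr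
  have hdbound : ∀ i, |d i| ≤ 1 := by
    intro i
    have hc : ∀ y : ℝ, chi y = 0 ∨ chi y = 1 := by
      intro y; unfold chi; split_ifs <;> simp
    rw [hd]
    simp only
    rcases hc (a i) with h1 | h1 <;> rw [h1] <;> by_cases h0 : i = 0 <;>
      simp [h0] <;> rcases hc (a (i - 1)) with h2 | h2 <;> rw [h2] <;> norm_num
  have hrb : |r| < 1 / 2 := by
    have h1 : |r| ≤ ∑ i ∈ Finset.Ico (j + 1) k, x ^ (i - j) := by
      refine (Finset.abs_sum_le_sum_abs _ _).trans (Finset.sum_le_sum ?_)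
      intro i hi
      have hji : j + 1 ≤ i := (Finset.mem_Ico.mp hi).1
      have hzp : (N : ℝ) ^ ((j : ℤ) - i) = x ^ (i - j) := by
        have : (j : ℤ) - i = -((i - j : ℕ) : ℤ) := by omega
        rw [this, zpow_neg, zpow_natCast, hx, inv_pow]
      rw [abs_mul, hzp]
      have hxp : 0 ≤ x ^ (i - j) := pow_nonneg hx0 _
      have : |x ^ (i - j)| = x ^ (i - j) := abs_of_nonneg hxp
      rw [this]
      nlinarith [hdbound i, abs_nonneg (d i)]
    have h2 : ∑ i ∈ Finset.Ico (j + 1) k, x ^ (i - j)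
        = ∑ t ∈ Finset.range (k - (j + 1)), x ^ (t + 1) := by
      rw [Finset.sum_Ico_eq_sum_range]
      apply Finset.sum_congr rfl
      intro t _
      congr 1
      omega
    have h3 := geom_aux x hx0 hx3 (k - (j + 1))
    have h4 : 0 < x ^ (k - (j + 1)) := pow_pos (by positivity) _
    calc |r| ≤ _ := h1
      _ = _ := h2
      _ < 1 / 2 := by linarith
  -- final computation
  have hform : (N : ℝ) ^ j * thetaAN a k N = (π * (m j : ℝ) + π * r) + (T : ℝ) * (2 * π) := by
    rw [key, hsplit, hA, hT]
    push_cast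
    ring
  have hcos : Real.cos ((N : ℝ) ^ j * thetaAN a k N) = Real.cos (π * (m j : ℝ) + π * r) := by
    rw [hform]
    exact_mod_cast Real.cos_add_int_mul_two_pi _ T
  have hcpos : 0 < Real.cos (π * r) := by
    apply Real.cos_pos_of_mem_Ioo
    constructor
    · have := abs_lt.mp hrb
      nlinarith [Real.pi_pos]
    · have := abs_lt.mp hrb
      nlinarith [Real.pi_pos]
  rcases ha j hj with h | h
  · have hmj : m j = 0 := by simp [hm, h]
    rw [hcos, hmj, h]
    simpa using hcpos
  · have hmj : m j = 1 := by
      simp only [hm]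
      rw [if_neg (by rw [h]; norm_num)]
    rw [hcos, hmj, h]
    push_cast
    rw [mul_one, add_comm, Real.cos_add_pi]
    linarith
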